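/- arXiv:1404.3493 — 3 statements merged into one kernel-verified Lean document; each statement's English description precedes it below -/
import Mathlib

section
/- For any real α > 1 and integer base b ≥ 2, the sum over all positive integers k of b^(-α·⌊log_b k⌋) equals b^α(b-1)/(b^α - b). -/
/-- `μ(α) = b^α (b-1) / (b^α - b)`. -/
noncomputable def mu (b : ℕ) (α : ℝ) : ℝ := (b : ℝ) ^ α * ((b : ℝ) - 1) / ((b : ℝ) ^ α - b)

/-- For α > 1 and b ≥ 2, `Σ_{k ≥ 1} b^{-α ⌊log_b k⌋} = b^α(b-1)/(b^α - b)`. -/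
theorem sum_walsh_weights (b : ℕ) (hb : 2 ≤ b) (α : ℝ) (hα : 1 < α) :
    (∑' k : ℕ, if k = 0 then (0 : ℝ) else (b : ℝ) ^ (-(α * (Nat.log b k : ℝ)))) = mu b α := by
  have hb1 : (1:ℝ) < (b:ℝ) := by exact_mod_cast hb
  have hb0 : (0:ℝ) < (b:ℝ) := by linarith
  set f : ℕ → ℝ := fun k => if k = 0 then (0:ℝ) else (b : ℝ) ^ (-(α * (Nat.log b k : ℝ))) with hf
  set r : ℝ := (b:ℝ) ^ (1 - α) with hr
  have hr0 : 0 ≤ r := Real.rpow_nonneg hb0.le _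
  have hr1 : r < 1 := Real.rpow_lt_one_of_one_lt_of_neg hb1 (by linarith)
  have hfnonneg : ∀ k, 0 ≤ f k := by
    intro k; by_cases h : k = 0 <;> simp [hf, h, Real.rpow_nonneg hb0.le]
  have hsum : Summable f := by
    refine Summable.of_nonneg_of_le (f := fun k : ℕ => (b:ℝ)^α * (k:ℝ)^(-α)) hfnonneg ?_ ?_
    · intro k
      rcases eq_or_ne k 0 with rfl | hk
      · simp [hf, Real.zero_rpow (by linarith : -α ≠ (0:ℝ))]
      · have hk1 : 1 ≤ k := Nat.one_le_iff_ne_zero.2 hk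
        have hkR : (0:ℝ) < k := by exact_mod_cast hk1
        have hlt : (k:ℝ) < (b:ℝ) ^ (Nat.log b k + 1 : ℕ) := by
          exact_mod_cast Nat.lt_pow_succ_log_self (by omega) k
        have h1 : f k = ((b:ℝ)^(Nat.log b k : ℕ))^(-α) := by
          rw [hf]; simp only [hk, if_false]
          rw [← Real.rpow_natCast (b:ℝ) (Nat.log b k), ← Real.rpow_mul hb0.le]
          ring_nf
        rw [h1]
        have h2 : (k:ℝ)/(b:ℝ) < (b:ℝ)^(Nat.log b k : ℕ) := by
          rw [div_lt_iff₀ hb0]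
          calc (k:ℝ) < (b:ℝ) ^ (Nat.log b k + 1 : ℕ) := hlt
          _ = (b:ℝ)^(Nat.log b k : ℕ) * b := by ring
        calc ((b:ℝ)^(Nat.log b k : ℕ))^(-α) ≤ ((k:ℝ)/(b:ℝ))^(-α) :=
              Real.rpow_le_rpow_of_nonpos (by positivity) h2.le (by linarith)
        _ = (b:ℝ)^α * (k:ℝ)^(-α) := by
            rw [Real.div_rpow hkR.le hb0.le, Real.rpow_neg hkR.le, Real.rpow_neg hb0.le]
            field_simp
    · exact Summable.mul_left _ ((Real.summable_nat_rpow).2 (by linarith))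
  have hblock : ∀ N : ℕ, ∑ k ∈ Finset.Ico (b^N) (b^(N+1)), f k = ((b:ℝ)-1) * r^N := by
    intro N
    have hconst : ∀ k ∈ Finset.Ico (b^N) (b^(N+1)), f k = (b:ℝ) ^ (-(α * (N:ℝ))) := by
      intro k hk
      rw [Finset.mem_Ico] at hk
      have hk0 : k ≠ 0 := by
        have : 0 < b^N := Nat.pow_pos (by omega)
        omega
      have hlog : Nat.log b k = N := Nat.log_eq_of_pow_le_of_lt_pow hk.1 hk.2
      simp [hf, hk0, hlog]
    rw [Finset.sum_congr rfl hconst, Finset.sum_const, Nat.card_Ico]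
    have hle : b^N ≤ b^(N+1) := Nat.pow_le_pow_right (by omega) (by omega)
    have hcast : ((b^(N+1) - b^N : ℕ) : ℝ) = ((b:ℝ)-1) * (b:ℝ)^(N:ℕ) := by
      rw [Nat.cast_sub hle]; push_cast; ring
    rw [nsmul_eq_mul, hcast]
    have hpowr : (b:ℝ)^(N:ℕ) * (b:ℝ) ^ (-(α * (N:ℝ))) = r^N := by
      rw [← Real.rpow_natCast (b:ℝ) N, ← Real.rpow_add hb0, hr,
        ← Real.rpow_natCast ((b:ℝ)^(1-α)) N, ← Real.rpow_mul hb0.le]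
      ring_nf
    rw [mul_assoc, hpowr]
  have hT : ∀ N : ℕ, ∑ k ∈ Finset.range (b^N), f k = ∑ n ∈ Finset.range N, ((b:ℝ)-1) * r^n := by
    intro N
    induction N with
    | zero => simp [hf]
    | succ N ih =>
      rw [Finset.range_eq_Ico,
        ← Finset.sum_Ico_consecutive f (Nat.zero_le (b^N))
          (Nat.pow_le_pow_right (by omega) (Nat.le_succ N)),
        ← Finset.range_eq_Ico, ih, hblock N, Finset.sum_range_succ]
  have hpow : Filter.Tendsto (fun N => b^N) Filter.atTop Filter.atTop :=
    tendsto_pow_atTop_atTop_of_one_lt (by omega)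
  have h1 : Filter.Tendsto (fun N => ∑ k ∈ Finset.range (b^N), f k) Filter.atTop
      (nhds (∑' k, f k)) := (hsum.hasSum.tendsto_sum_nat).comp hpow
  have hgeom : HasSum (fun n : ℕ => ((b:ℝ)-1) * r^n) (((b:ℝ)-1) * (1-r)⁻¹) :=
    (hasSum_geometric_of_lt_one hr0 hr1).mul_left _
  have h2 : Filter.Tendsto (fun N => ∑ n ∈ Finset.range N, ((b:ℝ)-1) * r^n) Filter.atTop
      (nhds (((b:ℝ)-1) * (1-r)⁻¹)) := hgeom.tendsto_sum_nat
  simp only [hT] at h1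
  have key : (∑' k, f k) = ((b:ℝ)-1) * (1-r)⁻¹ := tendsto_nhds_unique h1 h2
  have hA : (b:ℝ) < (b:ℝ)^α := by
    nth_rewrite 1 [← Real.rpow_one (b:ℝ)]
    exact (Real.rpow_lt_rpow_left_iff hb1).2 hα
  have hA0 : (0:ℝ) < (b:ℝ)^α := Real.rpow_pos_of_pos hb0 _
  have hrA : r = (b:ℝ)/(b:ℝ)^α := by
    rw [hr, Real.rpow_sub hb0, Real.rpow_one]
  have h1r : (1:ℝ) - (b:ℝ)/(b:ℝ)^α ≠ 0 := by
    have : (b:ℝ)/(b:ℝ)^α < 1 := (div_lt_one hA0).2 hA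
    linarith
  rw [key, hrA, mu]
  have hAB : (b:ℝ)^α - (b:ℝ) ≠ 0 := by linarith
  field_simp
end

section
/- Let b be a prime, m ∈ ℕ, N = b^m, α > 1. Then Σ over positive integers k divisible by N of b^{-α⌊log_b k⌋} equals μ(α)/b^{mα}, where μ(α) = b^α(b-1)/(b^α - b); in particular this sum is at most μ(α)/N. -/
section aux

variable {b : ℕ} {α : ℝ}

/-- The single-term function. -/
noncomputable def F (b : ℕ) (α : ℝ) (j : ℕ) : ℝ :=
  if j ≠ 0 then (b : ℝ) ^ (-(α * (Nat.log b j : ℝ))) else 0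

lemma F_nonneg (hb : 1 < b) (j : ℕ) : 0 ≤ F b α j := by
  unfold F
  split
  · positivity
  · exact le_refl 0

lemma log_pow_mul (hb : 1 < b) (m j : ℕ) (hj : j ≠ 0) :
    Nat.log b (b ^ m * j) = m + Nat.log b j := by
  induction m with
  | zero => simp
  | succ n ih =>
    have : b ^ (n + 1) * j = (b ^ n * j) * b := by ring
    rw [this, Nat.log_mul_base hb (by positivity), ih]
    omega

lemma partial_sum (hb : 1 < b) (hα : 1 < α) (n : ℕ) :
    ∑ j ∈ Finset.range (b ^ n), F b α j
      = ((b : ℝ) - 1) * ∑ i ∈ Finset.range n, ((b : ℝ) ^ (1 - α)) ^ i := by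
  have hb0 : (0 : ℝ) < b := by positivity
  induction n with
  | zero => simp [F]
  | succ n ih =>
    have hle : b ^ n ≤ b ^ (n + 1) := Nat.pow_le_pow_right (by omega) (by omega)
    rw [Finset.range_eq_Ico, ← Finset.sum_Ico_consecutive _ (Nat.zero_le _) hle,
      ← Finset.range_eq_Ico, ih]
    have hconst : ∑ j ∈ Finset.Ico (b ^ n) (b ^ (n + 1)), F b α j
        = ((b ^ (n + 1) - b ^ n : ℕ) : ℝ) * (b : ℝ) ^ (-(α * n)) := by
      have hval : ∀ j ∈ Finset.Ico (b ^ n) (b ^ (n + 1)), F b α j = (b : ℝ) ^ (-(α * n)) := by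
        intro j hj
        simp only [Finset.mem_Ico] at hj
        have hj0 : j ≠ 0 := by
          have := Nat.one_le_pow n b (by omega)
          omega
        have hlog : Nat.log b j = n := Nat.log_eq_of_pow_le_of_lt_pow hj.1 hj.2
        simp [F, hj0, hlog]
      rw [Finset.sum_congr rfl hval, Finset.sum_const, Nat.card_Ico, nsmul_eq_mul]
    rw [hconst]
    have hcast : ((b ^ (n + 1) - b ^ n : ℕ) : ℝ) = (b : ℝ) ^ n * ((b : ℝ) - 1) := by
      rw [Nat.cast_sub hle]
      push_cast
      ring
    have hx : ((b : ℝ) ^ (1 - α)) ^ n = (b : ℝ) ^ n * (b : ℝ) ^ (-(α * n)) := by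
      rw [← Real.rpow_natCast ((b : ℝ) ^ (1 - α)) n, ← Real.rpow_mul hb0.le,
        ← Real.rpow_natCast (b : ℝ) n, ← Real.rpow_add hb0]
      ring_nf
    rw [Finset.sum_range_succ, hcast]
    rw [hx]
    ring

lemma x_lt_one (hb : 1 < b) (hα : 1 < α) : (b : ℝ) ^ (1 - α) < 1 := by
  have hb1 : (1 : ℝ) < b := by exact_mod_cast hb
  calc (b : ℝ) ^ (1 - α) < (b : ℝ) ^ (0 : ℝ) :=
        Real.rpow_lt_rpow_of_exponent_lt hb1 (by linarith)
    _ = 1 := Real.rpow_zero _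

lemma hasSum_F (hb : 1 < b) (hα : 1 < α) :
    HasSum (F b α) (mu b α) := by
  have hb0 : (0 : ℝ) < b := by positivity
  have hb1 : (1 : ℝ) < b := by exact_mod_cast hb
  set x : ℝ := (b : ℝ) ^ (1 - α) with hxdef
  have hx0 : 0 ≤ x := (Real.rpow_pos_of_pos hb0 _).le
  have hx1 : x < 1 := x_lt_one hb hα
  have hgeom : HasSum (fun i : ℕ => x ^ i) (1 - x)⁻¹ := hasSum_geometric_of_lt_one hx0 hx1
  -- summability of F
  have hsum : Summable (F b α) := by
    apply summable_of_sum_range_le (c := ((b : ℝ) - 1) * (1 - x)⁻¹) (F_nonneg hb)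
    intro n
    have h1 : ∑ j ∈ Finset.range n, F b α j ≤ ∑ j ∈ Finset.range (b ^ n), F b α j := by
      apply Finset.sum_le_sum_of_subset_of_nonneg
      · exact Finset.range_subset_range.2 (Nat.le_of_lt (Nat.lt_pow_self (n := n) hb))
      · intro j _ _; exact F_nonneg hb j
    rw [partial_sum hb hα] at h1
    have h2 : ∑ i ∈ Finset.range n, x ^ i ≤ (1 - x)⁻¹ :=
      hgeom.summable.sum_le_tsum _ (fun i _ => pow_nonneg hx0 i) |>.trans_eq hgeom.tsum_eq
    have hbm1 : (0 : ℝ) ≤ (b : ℝ) - 1 := by linarith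
    calc ∑ j ∈ Finset.range n, F b α j ≤ ((b : ℝ) - 1) * ∑ i ∈ Finset.range n, x ^ i := h1
      _ ≤ ((b : ℝ) - 1) * (1 - x)⁻¹ := by
          exact mul_le_mul_of_nonneg_left h2 hbm1
  -- identify the sum via the subsequence b^n
  have hT : Filter.Tendsto (fun n => ∑ j ∈ Finset.range (b ^ n), F b α j)
      Filter.atTop (nhds (∑' j, F b α j)) :=
    hsum.hasSum.tendsto_sum_nat.comp (tendsto_pow_atTop_atTop_of_one_lt hb
      |>.comp Filter.tendsto_id |> fun h => (Filter.tendsto_atTop_atTop_of_monotone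
        (fun a c hac => Nat.pow_le_pow_right (by omega) hac)
        (fun c => ⟨c, Nat.le_of_lt (Nat.lt_pow_self (n := c) hb) |>.trans (le_refl _)⟩)))
  have hT2 : Filter.Tendsto (fun n => ∑ j ∈ Finset.range (b ^ n), F b α j)
      Filter.atTop (nhds (((b : ℝ) - 1) * (1 - x)⁻¹)) := by
    simp only [partial_sum hb hα]
    exact (hgeom.tendsto_sum_nat.const_mul _)
  have heq : (∑' j, F b α j) = ((b : ℝ) - 1) * (1 - x)⁻¹ := tendsto_nhds_unique hT hT2
  have hmu : mu b α = ((b : ℝ) - 1) * (1 - x)⁻¹ := by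
    unfold mu
    have hba : (b : ℝ) < (b : ℝ) ^ α := by
      calc (b : ℝ) = (b : ℝ) ^ (1 : ℝ) := (Real.rpow_one _).symm
        _ < (b : ℝ) ^ α := Real.rpow_lt_rpow_of_exponent_lt hb1 hα
    have hbα : (0 : ℝ) < (b : ℝ) ^ α := Real.rpow_pos_of_pos hb0 _
    have hxval : x = (b : ℝ) / (b : ℝ) ^ α := by
      rw [hxdef, Real.rpow_sub hb0, Real.rpow_one]
    rw [hxval]
    field_simp
  rw [hmu, ← heq]
  exact hsum.hasSum
end aux

/-- For prime `b`, `N = b^m`, `α > 1`: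
`Σ_{k ≥ 1, N ∣ k} b^{-α⌊log_b k⌋} = μ(α)/b^{mα} ≤ μ(α)/b^m`. -/
theorem sum_over_multiples (b m : ℕ) (hb : Nat.Prime b) (α : ℝ) (hα : 1 < α) :
    (∑' k : ℕ, if k ≠ 0 ∧ b ^ m ∣ k then (b : ℝ) ^ (-(α * (Nat.log b k : ℝ))) else 0)
        = mu b α / (b : ℝ) ^ ((m : ℝ) * α) ∧
      (∑' k : ℕ, if k ≠ 0 ∧ b ^ m ∣ k then (b : ℝ) ^ (-(α * (Nat.log b k : ℝ))) else 0)
        ≤ mu b α / (b : ℝ) ^ (m : ℕ) := by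
  have hb2 : 1 < b := hb.one_lt
  have hb0 : (0 : ℝ) < b := by positivity
  have hb1 : (1 : ℝ) < b := by exact_mod_cast hb2
  set g : ℕ → ℝ := fun k => if k ≠ 0 ∧ b ^ m ∣ k then (b : ℝ) ^ (-(α * (Nat.log b k : ℝ))) else 0
    with hg
  have hinj : Function.Injective (fun j : ℕ => b ^ m * j) := fun x y hxy => by
    have h : b ^ m ≠ 0 := by positivity
    simpa [Nat.mul_left_cancel_iff, Nat.pos_of_ne_zero h] using
      Nat.eq_of_mul_eq_mul_left (Nat.pos_of_ne_zero h) hxy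
  have hsupp : Function.support g ⊆ Set.range (fun j : ℕ => b ^ m * j) := by
    intro k hk
    simp only [Function.mem_support, hg] at hk
    by_cases hdvd : k ≠ 0 ∧ b ^ m ∣ k
    · obtain ⟨j, hj⟩ := hdvd.2
      exact ⟨j, hj.symm⟩
    · simp [hdvd] at hk
  have hkey : ∀ j : ℕ, g (b ^ m * j) = (b : ℝ) ^ (-((m : ℝ) * α)) * F b α j := by
    intro j
    by_cases hj : j = 0
    · simp [hg, hj, F]
    · have hne : b ^ m * j ≠ 0 := by positivity
      have hlog : Nat.log b (b ^ m * j) = m + Nat.log b j := log_pow_mul hb2 m j hj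
      simp only [hg, hne, ne_eq, not_false_eq_true, dvd_mul_right, and_self, if_true, hlog, F,
        hj, if_true]
      rw [← Real.rpow_add hb0]
      push_cast
      ring_nf
  have hmain : (∑' k : ℕ, g k) = (b : ℝ) ^ (-((m : ℝ) * α)) * mu b α := by
    rw [← hinj.tsum_eq hsupp]
    simp only [hkey]
    rw [tsum_mul_left, (hasSum_F hb2 hα).tsum_eq]
  have hmu_pos : 0 < mu b α := by
    unfold mu
    have hba : (b : ℝ) < (b : ℝ) ^ α := by
      calc (b : ℝ) = (b : ℝ) ^ (1 : ℝ) := (Real.rpow_one _).symm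
        _ < (b : ℝ) ^ α := Real.rpow_lt_rpow_of_exponent_lt hb1 hα
    have : (0 : ℝ) < (b : ℝ) ^ α := Real.rpow_pos_of_pos hb0 _
    apply div_pos
    · apply mul_pos this; linarith
    · linarith
  have heq : (∑' k : ℕ, g k) = mu b α / (b : ℝ) ^ ((m : ℝ) * α) := by
    rw [hmain, Real.rpow_neg hb0.le, div_eq_mul_inv, mul_comm]
  refine ⟨heq, ?_⟩
  rw [heq]
  apply div_le_div_of_nonneg_left hmu_pos.le (by positivity)
  calc ((b : ℝ) ^ (m : ℕ)) = (b : ℝ) ^ ((m : ℝ)) := (Real.rpow_natCast _ _).symm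
    _ ≤ (b : ℝ) ^ ((m : ℝ) * α) := Real.rpow_le_rpow_of_exponent_le hb1.le
        (by nlinarith [Nat.cast_nonneg (α := ℝ) m])
end

section
/- Let N = b^m for a prime b and m ∈ ℕ, let Z_N = {z ∈ {1,…,N−1} : gcd(z,N) = 1}, and let α > 1. Then for every n ∈ {1,…,N}, |(1/φ(N)) Σ_{z ∈ Z_N} Σ_{l ∈ ℤ\{0}} e^{2πi n z l / N}/|l|^α| ≤ 4ζ(α)/N · N/1, and moreover (1/N) Σ_{n=1}^{N} |(1/φ(N)) Σ_{z ∈ Z_N} Σ_{l ∈ ℤ\{0}} e^{2πi n z l / N}/|l|^α| ≤ 4ζ(α)/N. -/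
open scoped Real

/-- The Riemann zeta function for real `α > 1`, `ζ(α) = Σ_{n ≥ 1} n^{-α}`. -/
noncomputable def zetaR (α : ℝ) : ℝ := ∑' n : ℕ, (n : ℝ) ^ (-α)

/-- The reduced residues `Z_N = {z ∈ {1,…,N-1} : gcd(z,N)=1}`. -/
def ZN (N : ℕ) : Finset ℕ := (Finset.range N).filter fun z => 1 ≤ z ∧ Nat.gcd z N = 1

section helpers
variable {α : ℝ}

lemma hsummable (hα : 1 < α) : Summable (fun l : ℤ => |(l : ℝ)| ^ (-α)) :=
  Real.summable_abs_int_rpow hα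

lemma h_nonneg (α : ℝ) (l : ℤ) : 0 ≤ |(l : ℝ)| ^ (-α) := Real.rpow_nonneg (abs_nonneg _) _

lemma zsummable (hα : 1 < α) : Summable (fun n : ℕ => (n : ℝ) ^ (-α)) := by
  rw [Real.summable_nat_rpow]; linarith

lemma zetaR_nonneg (α : ℝ) : 0 ≤ zetaR α := tsum_nonneg fun n => Real.rpow_nonneg (Nat.cast_nonneg n) _

lemma Z_nonneg (α : ℝ) : 0 ≤ ∑' l : ℤ, |(l : ℝ)| ^ (-α) := tsum_nonneg fun l => h_nonneg α l

set_option maxHeartbeats 1000000 in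
lemma Z_le (hα : 1 < α) : (∑' l : ℤ, |(l : ℝ)| ^ (-α)) ≤ 2 * zetaR α := by
  have hinj1 : Function.Injective (fun n : ℕ => (n : ℤ)) := fun a b h => by simpa using h
  have hinj2 : Function.Injective (fun n : ℕ => -((n : ℤ) + 1)) := fun a b h => by simpa using h
  have h1 : Summable (fun n : ℕ => |((n : ℤ) : ℝ)| ^ (-α)) := by
    simpa [Function.comp_def] using (hsummable hα).comp_injective hinj1
  have h2 : Summable (fun n : ℕ => |(((-((n : ℤ) + 1) : ℤ)) : ℝ)| ^ (-α)) := by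
    simpa [Function.comp_def, neg_add] using (hsummable hα).comp_injective hinj2
  rw [tsum_of_nat_of_neg_add_one h1 h2]
  have e1 : (∑' n : ℕ, |(((n : ℤ)) : ℝ)| ^ (-α)) = zetaR α := by
    unfold zetaR
    exact tsum_congr fun n => by rw [Int.cast_natCast, abs_of_nonneg (Nat.cast_nonneg n)]
  have e2 : (∑' n : ℕ, |(((-((n : ℤ) + 1) : ℤ)) : ℝ)| ^ (-α)) = ∑' n : ℕ, ((n + 1 : ℕ) : ℝ) ^ (-α) := by
    refine tsum_congr fun n => ?_
    have : |(((-((n : ℤ) + 1) : ℤ)) : ℝ)| = ((n + 1 : ℕ) : ℝ) := by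
      push_cast
      rw [abs_neg, abs_of_nonneg] <;> positivity
    rw [this]
  have e3 : (∑' n : ℕ, ((n + 1 : ℕ) : ℝ) ^ (-α)) = zetaR α := by
    unfold zetaR
    rw [Summable.tsum_eq_zero_add (zsummable hα)]
    simp [Real.zero_rpow (by linarith : -α ≠ 0)]
  rw [e1, e2, e3]; linarith

end helpers

lemma sum_exp_range (N : ℕ) (hN : 0 < N) (k : ℤ) :
    ∑ z ∈ Finset.range N, Complex.exp (2 * Real.pi * Complex.I * k * z / N)
      = if (N : ℤ) ∣ k then (N : ℂ) else 0 := by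
  have hNC : (N : ℂ) ≠ 0 := Nat.cast_ne_zero.mpr hN.ne'
  set ω : ℂ := Complex.exp (2 * Real.pi * Complex.I * k / N) with hω
  have hz : ∀ z : ℕ, Complex.exp (2 * Real.pi * Complex.I * k * z / N) = ω ^ z := by
    intro z
    rw [hω, ← Complex.exp_nat_mul]
    ring_nf
  simp_rw [hz]
  by_cases hdvd : (N : ℤ) ∣ k
  · obtain ⟨t, ht⟩ := id hdvd
    have hω1 : ω = 1 := by
      rw [hω, Complex.exp_eq_one_iff]
      refine ⟨t, ?_⟩
      rw [ht]
      push_cast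
      field_simp
    simp [hω1, hdvd]
  · have hω1 : ω ≠ 1 := by
      intro h
      rw [hω, Complex.exp_eq_one_iff] at h
      obtain ⟨t, ht⟩ := h
      apply hdvd
      refine ⟨t, ?_⟩
      have hpi : (Real.pi : ℂ) ≠ 0 := Complex.ofReal_ne_zero.mpr Real.pi_ne_zero
      have h2 : (2 : ℂ) * Real.pi * Complex.I ≠ 0 := by
        simp [hpi, Complex.I_ne_zero]
      have : (k : ℂ) = (N : ℂ) * t := by
        field_simp at ht
        refine mul_left_cancel₀ h2 ?_
        linear_combination (2 * (Real.pi : ℂ) * Complex.I) * ht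
      exact_mod_cast this
    rw [geom_sum_eq hω1, if_neg hdvd]
    have hωN : ω ^ N = 1 := by
      rw [hω, ← Complex.exp_nat_mul]
      have : (N : ℂ) * (2 * Real.pi * Complex.I * k / N) = k * (2 * Real.pi * Complex.I) := by
        field_simp
      rw [this, Complex.exp_int_mul_two_pi_mul_I]
    rw [hωN]
    simp

lemma ZN_eq_filter {b m : ℕ} (hb : Nat.Prime b) (hm : 0 < m) :
    ZN (b ^ m) = (Finset.range (b ^ m)).filter fun z => ¬ b ∣ z := by
  ext z
  simp only [ZN, Finset.mem_filter, Finset.mem_range]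
  constructor
  · rintro ⟨hz, _, hg⟩
    refine ⟨hz, fun hdvd => ?_⟩
    have : b ∣ Nat.gcd z (b ^ m) := Nat.dvd_gcd hdvd (dvd_pow_self b hm.ne')
    rw [hg] at this
    exact hb.one_lt.ne' (Nat.dvd_one.mp this)
  · rintro ⟨hz, hdvd⟩
    refine ⟨hz, ?_, ?_⟩
    · by_contra h
      push_neg at h
      interval_cases z
      exact hdvd (dvd_zero b)
    · have : Nat.Coprime (b ^ m) z := (Nat.coprime_pow_left_iff hm _ _).mpr
        (hb.coprime_iff_not_dvd.mpr hdvd)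
      exact Nat.coprime_comm.mp this

lemma card_ZN {b m : ℕ} (hb : Nat.Prime b) (hm : 0 < m) :
    (ZN (b ^ m)).card = Nat.totient (b ^ m) := by
  rw [Nat.totient]
  congr 1
  ext z
  simp only [ZN, Finset.mem_filter, Finset.mem_range]
  constructor
  · rintro ⟨hz, _, hg⟩
    exact ⟨hz, Nat.coprime_comm.mp hg⟩
  · rintro ⟨hz, hg⟩
    refine ⟨hz, ?_, Nat.coprime_comm.mp hg⟩
    by_contra h
    push_neg at h
    interval_cases z
    simp [Nat.coprime_zero_right] at hg
    exact hg.elim (fun h => hb.one_lt.ne' h) (fun h => hm.ne' h)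

lemma sum_exp_ZN {b m : ℕ} (hb : Nat.Prime b) (hm : 0 < m) (k : ℤ) :
    ∑ z ∈ ZN (b ^ m), Complex.exp (2 * Real.pi * Complex.I * k * z / (b ^ m : ℕ))
      = (if ((b ^ m : ℕ) : ℤ) ∣ k then ((b ^ m : ℕ) : ℂ) else 0)
        - (if ((b ^ (m - 1) : ℕ) : ℤ) ∣ k then ((b ^ (m - 1) : ℕ) : ℂ) else 0) := by
  have hbpos : 0 < b := hb.pos
  have hNpos : 0 < b ^ m := pow_pos hbpos m
  have hMpos : 0 < b ^ (m - 1) := pow_pos hbpos (m - 1)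
  have hbm : b ^ m = b * b ^ (m - 1) := by
    obtain ⟨m', rfl⟩ : ∃ m', m = m' + 1 := ⟨m - 1, by omega⟩
    simp only [Nat.add_sub_cancel]
    rw [pow_succ]
    ring
  set f : ℕ → ℂ := fun z => Complex.exp (2 * Real.pi * Complex.I * k * z / (b ^ m : ℕ)) with hf
  have hsplit : ∑ z ∈ Finset.range (b ^ m), f z
      = ∑ z ∈ ZN (b ^ m), f z + ∑ z ∈ (Finset.range (b ^ m)).filter (fun z => b ∣ z), f z := by
    rw [ZN_eq_filter hb hm]
    rw [← Finset.sum_filter_add_sum_filter_not (Finset.range (b ^ m)) (fun z => b ∣ z) f]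
    ring
  have hmult : ∑ z ∈ (Finset.range (b ^ m)).filter (fun z => b ∣ z), f z
      = ∑ w ∈ Finset.range (b ^ (m - 1)),
          Complex.exp (2 * Real.pi * Complex.I * k * w / (b ^ (m - 1) : ℕ)) := by
    refine Finset.sum_nbij' (fun z => z / b) (fun w => b * w) ?_ ?_ ?_ ?_ ?_
    · intro z hz
      simp only [Finset.mem_filter, Finset.mem_range] at hz
      obtain ⟨hzlt, w, rfl⟩ := hz
      simp only [Finset.mem_range]
      rw [Nat.mul_div_cancel_left _ hbpos]
      rw [hbm] at hzlt
      exact lt_of_mul_lt_mul_left hzlt (Nat.zero_le b)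
    · intro w hw
      simp only [Finset.mem_range] at hw
      simp only [Finset.mem_filter, Finset.mem_range]
      exact ⟨by rw [hbm]; exact (Nat.mul_lt_mul_left hbpos).mpr hw, Dvd.intro w rfl⟩
    · intro z hz
      simp only [Finset.mem_filter, Finset.mem_range] at hz
      obtain ⟨_, w, rfl⟩ := hz
      simp only [Nat.mul_div_cancel_left _ hbpos]
    · intro w hw
      simp only [Nat.mul_div_cancel_left _ hbpos]
    · intro z hz
      simp only [Finset.mem_filter, Finset.mem_range] at hz
      obtain ⟨_, w, rfl⟩ := hz
      simp only [Nat.mul_div_cancel_left _ hbpos, hf]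
      congr 1
      have hMC : ((b ^ (m - 1) : ℕ) : ℂ) ≠ 0 := Nat.cast_ne_zero.mpr hMpos.ne'
      have hNC : ((b ^ m : ℕ) : ℂ) ≠ 0 := Nat.cast_ne_zero.mpr hNpos.ne'
      have : ((b ^ m : ℕ) : ℂ) = (b : ℂ) * ((b ^ (m - 1) : ℕ) : ℂ) := by
        rw [hbm]; push_cast; ring
      rw [this]
      have hbC : (b : ℂ) ≠ 0 := Nat.cast_ne_zero.mpr hbpos.ne'
      field_simp
      push_cast
      ring
  rw [sum_exp_range _ hMpos k] at hmult
  have := sum_exp_range (b ^ m) hNpos k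
  rw [hsplit, hmult] at this
  rw [eq_sub_iff_add_eq]
  exact this

lemma tsum_indicator_dvd {α : ℝ} (hα : 1 < α) (K : ℕ) (hK : 0 < K) :
    ∑' l : ℤ, (if (K : ℤ) ∣ l then |(l : ℝ)| ^ (-α) else 0)
      = (K : ℝ) ^ (-α) * ∑' l : ℤ, |(l : ℝ)| ^ (-α) := by
  set f : ℤ → ℝ := fun l => if (K : ℤ) ∣ l then |(l : ℝ)| ^ (-α) else 0 with hf
  have hinj : Function.Injective (fun u : ℤ => (K : ℤ) * u) :=
    fun a c h => by
      have hK' : (K : ℤ) ≠ 0 := Int.natCast_ne_zero.mpr hK.ne'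
      exact mul_left_cancel₀ hK' h
  have hsupp : Function.support f ⊆ Set.range (fun u : ℤ => (K : ℤ) * u) := by
    intro l hl
    rw [Function.mem_support, hf] at hl
    by_cases h : (K : ℤ) ∣ l
    · obtain ⟨u, rfl⟩ := h
      exact ⟨u, rfl⟩
    · simp [h] at hl
  rw [← hinj.tsum_eq hsupp]
  have : ∀ u : ℤ, f ((K : ℤ) * u) = (K : ℝ) ^ (-α) * |(u : ℝ)| ^ (-α) := by
    intro u
    rw [hf]
    simp only [dvd_mul_right, if_pos]
    push_cast
    rw [abs_mul, Real.mul_rpow (abs_nonneg _) (abs_nonneg _),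
      abs_of_nonneg (by positivity : (0:ℝ) ≤ (K:ℝ))]
  simp_rw [this]
  exact tsum_mul_left

lemma dvd_mul_iff_gcd (K n : ℕ) (hK : 0 < K) (l : ℤ) :
    (K : ℤ) ∣ (n : ℤ) * l ↔ ((K / Nat.gcd K n : ℕ) : ℤ) ∣ l := by
  have hd : 0 < Nat.gcd K n := Nat.gcd_pos_of_pos_left n hK
  set d := Nat.gcd K n with hdd
  have hdK : d ∣ K := Nat.gcd_dvd_left K n
  have hdn : d ∣ n := Nat.gcd_dvd_right K n
  have hcop : Nat.Coprime (K / d) (n / d) := Nat.coprime_div_gcd_div_gcd hd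
  set K' := K / d with hKd
  set n' := n / d with hnd
  have hK' : K = d * K' := (Nat.mul_div_cancel' hdK).symm
  have hn' : n = d * n' := (Nat.mul_div_cancel' hdn).symm
  have hcopZ : IsCoprime (K' : ℤ) (n' : ℤ) := by
    rw [Int.isCoprime_iff_gcd_eq_one]
    exact_mod_cast hcop
  constructor
  · intro h
    have h2 : ((d : ℤ)) * K' ∣ (d : ℤ) * (n' * l) := by
      have : ((K : ℕ) : ℤ) = (d : ℤ) * K' := by exact_mod_cast hK'
      have hn2 : ((n : ℕ) : ℤ) = (d : ℤ) * n' := by exact_mod_cast hn'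
      rw [this] at h
      rw [hn2] at h
      convert h using 1
      ring
    have h3 : (K' : ℤ) ∣ n' * l :=
      (mul_dvd_mul_iff_left (by exact_mod_cast hd.ne' : (d : ℤ) ≠ 0)).mp h2
    exact hcopZ.dvd_of_dvd_mul_left h3
  · intro h
    obtain ⟨t, rfl⟩ := h
    have : ((n : ℕ) : ℤ) = (d : ℤ) * n' := by exact_mod_cast hn'
    rw [this]
    have hKz : ((K : ℕ) : ℤ) = (d : ℤ) * K' := by exact_mod_cast hK'
    rw [hKz]
    exact ⟨n' * t, by ring⟩

lemma norm_term {α : ℝ} (N n z : ℕ) (l : ℤ) :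
    ‖(if l = 0 then (0 : ℂ) else
        Complex.exp (2 * Real.pi * Complex.I * n * z * l / (N : ℕ)) * (|(l : ℝ)| ^ (-α) : ℝ))‖
      = if l = 0 then 0 else |(l : ℝ)| ^ (-α) := by
  by_cases hl : l = 0
  · simp [hl]
  · rw [if_neg hl, if_neg hl, norm_mul]
    by_cases hN : N = 0
    · simp [hN, Complex.norm_real, abs_of_nonneg (h_nonneg α l)]
    · have harg : 2 * (Real.pi : ℂ) * Complex.I * n * z * l / (N : ℕ)
          = ((2 * Real.pi * n * z * l / N : ℝ) : ℂ) * Complex.I := by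
        push_cast
        ring
      rw [harg]
      rw [Complex.norm_exp_ofReal_mul_I, one_mul, Complex.norm_real,
        Real.norm_eq_abs, abs_of_nonneg (h_nonneg α l)]

lemma summable_term {α : ℝ} (hα : 1 < α) (N n z : ℕ) :
    Summable (fun l : ℤ => if l = 0 then (0 : ℂ) else
        Complex.exp (2 * Real.pi * Complex.I * n * z * l / (N : ℕ)) * (|(l : ℝ)| ^ (-α) : ℝ)) := by
  refine Summable.of_norm_bounded (hsummable hα) fun l => ?_
  rw [norm_term]
  by_cases hl : l = 0
  · simp [hl, Real.zero_rpow (by linarith : -α ≠ 0)]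
  · rw [if_neg hl]

lemma summable_indC {α : ℝ} (hα : 1 < α) (K : ℕ) (n : ℕ) :
    Summable (fun l : ℤ => (((if (K : ℤ) ∣ (n : ℤ) * l then |(l : ℝ)| ^ (-α) else 0 : ℝ)) : ℂ)) := by
  rw [Complex.summable_ofReal]
  refine Summable.of_nonneg_of_le (fun l => ?_) (fun l => ?_) (hsummable hα)
  · by_cases h : (K : ℤ) ∣ (n : ℤ) * l <;> simp [h, h_nonneg α l]
  · by_cases h : (K : ℤ) ∣ (n : ℤ) * l <;> simp [h, h_nonneg α l]

lemma Tn_eq {b m : ℕ} (hb : Nat.Prime b) (hm : 0 < m) {α : ℝ} (hα : 1 < α) (n : ℕ) :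
    ∑ z ∈ ZN (b ^ m), ∑' l : ℤ, (if l = 0 then (0 : ℂ) else
        Complex.exp (2 * Real.pi * Complex.I * n * z * l / (b ^ m : ℕ)) * (|(l : ℝ)| ^ (-α) : ℝ))
    = ((((b ^ m / Nat.gcd (b ^ m) n : ℕ) : ℝ) ^ (-α) * ((b ^ m : ℕ) : ℝ)
        - ((b ^ (m - 1) / Nat.gcd (b ^ (m - 1)) n : ℕ) : ℝ) ^ (-α) * ((b ^ (m - 1) : ℕ) : ℝ))
        * ∑' l : ℤ, |(l : ℝ)| ^ (-α) : ℝ) := by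
  have hNpos : 0 < b ^ m := pow_pos hb.pos m
  have hMpos : 0 < b ^ (m - 1) := pow_pos hb.pos (m - 1)
  rw [← Summable.tsum_finsetSum (fun z _ => summable_term hα (b ^ m) n z)]
  have key : ∀ l : ℤ, (∑ z ∈ ZN (b ^ m), if l = 0 then (0 : ℂ) else
        Complex.exp (2 * Real.pi * Complex.I * n * z * l / (b ^ m : ℕ)) * (|(l : ℝ)| ^ (-α) : ℝ))
      = ((b ^ m : ℕ) : ℂ) * (((if ((b ^ m : ℕ) : ℤ) ∣ (n : ℤ) * l then |(l : ℝ)| ^ (-α) else 0 : ℝ)) : ℂ)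
        - ((b ^ (m - 1) : ℕ) : ℂ) * (((if ((b ^ (m - 1) : ℕ) : ℤ) ∣ (n : ℤ) * l then |(l : ℝ)| ^ (-α) else 0 : ℝ)) : ℂ) := by
    intro l
    by_cases hl : l = 0
    · subst hl
      simp [Real.zero_rpow (by linarith : -α ≠ 0)]
    · simp only [if_neg hl]
      have step : ∀ z ∈ ZN (b ^ m),
          Complex.exp (2 * Real.pi * Complex.I * n * z * l / (b ^ m : ℕ)) * (|(l : ℝ)| ^ (-α) : ℝ)
          = Complex.exp (2 * Real.pi * Complex.I * ((((n : ℤ) * l : ℤ)) : ℂ) * z / (b ^ m : ℕ)) * (|(l : ℝ)| ^ (-α) : ℝ) := by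
        intro z _
        congr 2
        push_cast
        ring
      rw [Finset.sum_congr rfl step, ← Finset.sum_mul, sum_exp_ZN hb hm ((n : ℤ) * l)]
      by_cases h1 : ((b ^ m : ℕ) : ℤ) ∣ (n : ℤ) * l
      · by_cases h2 : ((b ^ (m - 1) : ℕ) : ℤ) ∣ (n : ℤ) * l
        · rw [if_pos h1, if_pos h2, if_pos h1, if_pos h2]; push_cast; ring
        · rw [if_pos h1, if_neg h2, if_pos h1, if_neg h2]; push_cast; ring
      · by_cases h2 : ((b ^ (m - 1) : ℕ) : ℤ) ∣ (n : ℤ) * l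
        · rw [if_neg h1, if_pos h2, if_neg h1, if_pos h2]; push_cast; ring
        · rw [if_neg h1, if_neg h2, if_neg h1, if_neg h2]; push_cast; ring
  rw [tsum_congr key]
  rw [Summable.tsum_sub ((summable_indC hα (b ^ m) n).mul_left _) ((summable_indC hα (b ^ (m - 1)) n).mul_left _),
    tsum_mul_left, tsum_mul_left, ← Complex.ofReal_tsum, ← Complex.ofReal_tsum]
  simp_rw [dvd_mul_iff_gcd (b ^ m) n hNpos, dvd_mul_iff_gcd (b ^ (m - 1)) n hMpos]
  rw [tsum_indicator_dvd hα _ (Nat.div_pos (Nat.le_of_dvd hNpos (Nat.gcd_dvd_left _ _)) (Nat.gcd_pos_of_pos_left _ hNpos)),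
    tsum_indicator_dvd hα _ (Nat.div_pos (Nat.le_of_dvd hMpos (Nat.gcd_dvd_left _ _)) (Nat.gcd_pos_of_pos_left _ hMpos))]
  push_cast
  ring

lemma gcd_facts {b m : ℕ} (hb : Nat.Prime b) (hm : 0 < m) (n : ℕ) (h1 : 1 ≤ n) (h2 : n < b ^ m) :
    ∃ j, (Nat.gcd (b ^ m) n).factorization b = j ∧ j < m ∧
      Nat.gcd (b ^ m) n = b ^ j ∧ Nat.gcd (b ^ (m - 1)) n = b ^ j := by
  obtain ⟨j, hjm, hgcd⟩ := (Nat.dvd_prime_pow hb).mp (Nat.gcd_dvd_left (b ^ m) n)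
  have hjlt : j < m := by
    rcases Nat.lt_or_ge j m with h | h
    · exact h
    · exfalso
      have hjm' : j = m := le_antisymm hjm h
      have : b ^ m ∣ n := by
        rw [← hjm', ← hgcd]
        exact Nat.gcd_dvd_right _ _
      have := Nat.le_of_dvd (by omega) this
      omega
  refine ⟨j, ?_, hjlt, hgcd, ?_⟩
  · rw [hgcd, hb.factorization_pow, Finsupp.single_eq_same]
  · have step1 : Nat.gcd (b ^ (m - 1)) n = Nat.gcd (b ^ (m - 1)) (Nat.gcd (b ^ m) n) := by
      conv_lhs => rw [← Nat.gcd_eq_left (pow_dvd_pow b (by omega : m - 1 ≤ m))]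
      rw [Nat.gcd_assoc]
    rw [step1, hgcd]
    exact Nat.gcd_eq_right (pow_dvd_pow b (by omega : j ≤ m - 1))

lemma card_filter_le {b m : ℕ} (hb : Nat.Prime b) (hm : 0 < m) (j : ℕ) (hj : j < m) :
    ((Finset.Icc 1 (b ^ m - 1)).filter
        (fun n => (Nat.gcd (b ^ m) n).factorization b = j)).card ≤ Nat.totient (b ^ (m - j)) := by
  have hbpos := hb.pos
  have hNpos : 0 < b ^ m := pow_pos hbpos m
  rw [← card_ZN hb (by omega : 0 < m - j)]
  apply Finset.card_le_card_of_injOn (fun n => n / b ^ j)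
  · intro n hn
    simp only [Finset.mem_coe, Finset.mem_filter, Finset.mem_Icc] at hn
    obtain ⟨⟨hn1, hn2⟩, hfac⟩ := hn
    obtain ⟨j', hj', _, hgcd, _⟩ := gcd_facts hb hm n hn1 (by omega)
    have hj'j : j = j' := by rw [← hfac, hj']
    subst hj'j
    have hdvd : b ^ j ∣ n := hgcd ▸ Nat.gcd_dvd_right (b ^ m) n
    have hjpos : 0 < b ^ j := pow_pos hbpos j
    simp only [Finset.mem_coe, ZN, Finset.mem_filter, Finset.mem_range]
    have hnotb : ¬ b ∣ n / b ^ j := by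
      intro hbd
      have : b ^ (j + 1) ∣ n := by
        obtain ⟨t, ht⟩ := hbd
        refine ⟨t, ?_⟩
        rw [pow_succ]
        have := Nat.div_mul_cancel hdvd
        calc n = b ^ j * (n / b ^ j) := by rw [Nat.mul_div_cancel' hdvd]
        _ = b ^ j * (b * t) := by rw [ht]
        _ = b ^ j * b * t := by ring
      have hdvd2 : b ^ (j + 1) ∣ Nat.gcd (b ^ m) n :=
        Nat.dvd_gcd (pow_dvd_pow b (by omega)) this
      rw [hgcd] at hdvd2
      have := Nat.le_of_dvd (pow_pos hbpos j) hdvd2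
      have := Nat.pow_lt_pow_right hb.one_lt (by omega : j < j + 1)
      omega
    refine ⟨?_, ?_, ?_⟩
    · rw [Nat.div_lt_iff_lt_mul hjpos, ← pow_add]
      have : m - j + j = m := by omega
      rw [this]
      omega
    · rw [Nat.one_le_div_iff hjpos]
      calc b ^ j = Nat.gcd (b ^ m) n := hgcd.symm
      _ ≤ n := Nat.le_of_dvd (by omega) (Nat.gcd_dvd_right _ _)
    · have : Nat.Coprime (b ^ (m - j)) (n / b ^ j) :=
        (Nat.coprime_pow_left_iff (by omega) _ _).mpr (hb.coprime_iff_not_dvd.mpr hnotb)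
      exact Nat.coprime_comm.mp this
  · intro n1 h1 n2 h2 heq
    simp only [Finset.mem_coe, Finset.mem_filter, Finset.mem_Icc] at h1 h2
    obtain ⟨⟨h11, h12⟩, hfac1⟩ := h1
    obtain ⟨⟨h21, h22⟩, hfac2⟩ := h2
    obtain ⟨j1, hj1, _, hgcd1, _⟩ := gcd_facts hb hm n1 h11 (by omega)
    obtain ⟨j2, hj2, _, hgcd2, _⟩ := gcd_facts hb hm n2 h21 (by omega)
    have e1 : j = j1 := by rw [← hfac1, hj1]
    subst e1
    have e2 : j = j2 := by rw [← hfac2, hj2]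
    subst e2
    have hd1 : b ^ j ∣ n1 := hgcd1 ▸ Nat.gcd_dvd_right (b ^ m) n1
    have hd2 : b ^ j ∣ n2 := hgcd2 ▸ Nat.gcd_dvd_right (b ^ m) n2
    calc n1 = b ^ j * (n1 / b ^ j) := (Nat.mul_div_cancel' hd1).symm
    _ = b ^ j * (n2 / b ^ j) := by rw [show n1 / b ^ j = n2 / b ^ j from heq]
    _ = n2 := Nat.mul_div_cancel' hd2

lemma rpow_pow_conv {x : ℝ} (hx : 0 < x) (s : ℕ) (β : ℝ) :
    ((x ^ s : ℝ)) ^ β = x ^ ((s : ℝ) * β) := by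
  rw [← Real.rpow_natCast x s, ← Real.rpow_mul hx.le]

lemma pow_mul_rpow {x α : ℝ} (hx : 0 < x) (k : ℕ) :
    (x : ℝ) ^ k * x ^ (-(k : ℝ) * α) = (x ^ (1 - α)) ^ k := by
  rw [← Real.rpow_natCast (x ^ (1 - α)) k, ← Real.rpow_mul hx.le,
    ← Real.rpow_natCast x k, ← Real.rpow_add hx]
  congr 1
  ring

lemma abs_diff_eq {x α : ℝ} (hx : 1 < x) (hα : 1 < α) (k j : ℕ) :
    |(x ^ (k + 1) : ℝ) ^ (-α) * x ^ (k + 1 + j) - (x ^ k : ℝ) ^ (-α) * x ^ (k + j)|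
      = x ^ (k + j) * x ^ (-(k : ℝ) * α) * (1 - x ^ (1 - α)) := by
  have hx0 : (0 : ℝ) < x := by linarith
  have h2 : (x ^ k : ℝ) ^ (-α) * x ^ (k + j) = x ^ ((k : ℝ) * (-α) + ((k + j : ℕ) : ℝ)) := by
    rw [rpow_pow_conv hx0, ← Real.rpow_natCast x (k + j), ← Real.rpow_add hx0]
  have h1 : (x ^ (k + 1) : ℝ) ^ (-α) * x ^ (k + 1 + j)
      = x ^ (1 - α) * x ^ ((k : ℝ) * (-α) + ((k + j : ℕ) : ℝ)) := by
    rw [rpow_pow_conv hx0, ← Real.rpow_natCast x (k + 1 + j), ← Real.rpow_add hx0,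
      ← Real.rpow_add hx0]
    congr 1
    push_cast
    ring
  rw [h1, h2]
  set A := x ^ ((k : ℝ) * (-α) + ((k + j : ℕ) : ℝ)) with hA
  have hA0 : 0 < A := Real.rpow_pos_of_pos hx0 _
  have hr1 : x ^ (1 - α) < 1 := Real.rpow_lt_one_of_one_lt_of_neg hx (by linarith)
  rw [show x ^ (1 - α) * A - A = -(A * (1 - x ^ (1 - α))) by ring, abs_neg,
    abs_of_nonneg (by nlinarith)]
  have : x ^ (k + j) * x ^ (-(k : ℝ) * α) = A := by
    rw [hA, ← Real.rpow_natCast x (k + j), ← Real.rpow_add hx0]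
    congr 1
    push_cast
    ring
  rw [← this]

/-- For `N = b^m` with `b` prime and `α > 1`: for every `n ∈ {1,…,N}`,
`|(1/φ(N)) Σ_{z ∈ Z_N} Σ_{l ≠ 0} e^{2πi n z l/N}/|l|^α| ≤ 4ζ(α)`, and the average over
`n = 1,…,N` of these quantities is at most `4ζ(α)/N`. -/
theorem lattice_character_sum_bound (b m : ℕ) (hb : Nat.Prime b) (hm : 0 < m)
    (α : ℝ) (hα : 1 < α) :
    (∀ n ∈ Finset.Icc 1 (b ^ m),
      ‖(1 / (Nat.totient (b ^ m) : ℂ)) * ∑ z ∈ ZN (b ^ m),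
          ∑' l : ℤ, if l = 0 then (0 : ℂ) else
            Complex.exp (2 * Real.pi * Complex.I * n * z * l / (b ^ m : ℕ)) *
              (|(l : ℝ)| ^ (-α) : ℝ)‖ ≤ 4 * zetaR α) ∧
    (1 / ((b : ℝ) ^ m)) * ∑ n ∈ Finset.Icc 1 (b ^ m),
        ‖(1 / (Nat.totient (b ^ m) : ℂ)) * ∑ z ∈ ZN (b ^ m),
          ∑' l : ℤ, if l = 0 then (0 : ℂ) else
            Complex.exp (2 * Real.pi * Complex.I * n * z * l / (b ^ m : ℕ)) *
              (|(l : ℝ)| ^ (-α) : ℝ)‖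
      ≤ 4 * zetaR α / (b : ℝ) ^ m := by
  have hNpos : 0 < b ^ m := pow_pos hb.pos m
  have hMpos : 0 < b ^ (m - 1) := pow_pos hb.pos (m - 1)
  have hb2 : 2 ≤ b := hb.two_le
  have hxR : (1 : ℝ) < (b : ℝ) := by exact_mod_cast hb.one_lt
  have hx0 : (0 : ℝ) < (b : ℝ) := by linarith
  have hφ : Nat.totient (b ^ m) = b ^ (m - 1) * (b - 1) := Nat.totient_prime_pow hb hm
  have hφpos : 0 < Nat.totient (b ^ m) := Nat.totient_pos.mpr hNpos
  have hφR : (0 : ℝ) < (Nat.totient (b ^ m) : ℝ) := by exact_mod_cast hφpos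
  have hφcast : ((Nat.totient (b ^ m) : ℕ) : ℝ) = (b : ℝ) ^ (m - 1) * ((b : ℝ) - 1) := by
    rw [hφ]
    push_cast [Nat.cast_sub hb.one_le]
    ring
  have hZ0 : 0 ≤ ∑' l : ℤ, |(l : ℝ)| ^ (-α) := Z_nonneg α
  have hZle : (∑' l : ℤ, |(l : ℝ)| ^ (-α)) ≤ 2 * zetaR α := Z_le hα
  -- norm evaluation for every n
  have hval : ∀ n : ℕ,
      ‖(1 / (Nat.totient (b ^ m) : ℂ)) * ∑ z ∈ ZN (b ^ m),
          ∑' l : ℤ, if l = 0 then (0 : ℂ) else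
            Complex.exp (2 * Real.pi * Complex.I * n * z * l / (b ^ m : ℕ)) *
              (|(l : ℝ)| ^ (-α) : ℝ)‖
      = |((b ^ m / Nat.gcd (b ^ m) n : ℕ) : ℝ) ^ (-α) * ((b ^ m : ℕ) : ℝ)
          - ((b ^ (m - 1) / Nat.gcd (b ^ (m - 1)) n : ℕ) : ℝ) ^ (-α) * ((b ^ (m - 1) : ℕ) : ℝ)|
          * (∑' l : ℤ, |(l : ℝ)| ^ (-α)) / (Nat.totient (b ^ m) : ℝ) := by
    intro n
    rw [Tn_eq hb hm hα n, norm_mul, Complex.norm_real, Real.norm_eq_abs, abs_mul,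
      abs_of_nonneg hZ0]
    rw [show ‖(1 / ((Nat.totient (b ^ m) : ℕ) : ℂ))‖ = 1 / ((Nat.totient (b ^ m) : ℕ) : ℝ) by
      rw [norm_div, norm_one, Complex.norm_natCast]]
    ring
  -- pointwise bound by 4ζ
  have bound1 : ∀ n : ℕ,
      ‖(1 / (Nat.totient (b ^ m) : ℂ)) * ∑ z ∈ ZN (b ^ m),
          ∑' l : ℤ, if l = 0 then (0 : ℂ) else
            Complex.exp (2 * Real.pi * Complex.I * n * z * l / (b ^ m : ℕ)) *
              (|(l : ℝ)| ^ (-α) : ℝ)‖ ≤ 4 * zetaR α := by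
    intro n
    rw [hval n]
    have h1le : (1 : ℝ) ≤ ((b ^ m / Nat.gcd (b ^ m) n : ℕ) : ℝ) := by
      have : 0 < b ^ m / Nat.gcd (b ^ m) n :=
        Nat.div_pos (Nat.le_of_dvd hNpos (Nat.gcd_dvd_left _ _))
          (Nat.gcd_pos_of_pos_left _ hNpos)
      exact_mod_cast this
    have h2le : (1 : ℝ) ≤ ((b ^ (m - 1) / Nat.gcd (b ^ (m - 1)) n : ℕ) : ℝ) := by
      have : 0 < b ^ (m - 1) / Nat.gcd (b ^ (m - 1)) n :=
        Nat.div_pos (Nat.le_of_dvd hMpos (Nat.gcd_dvd_left _ _))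
          (Nat.gcd_pos_of_pos_left _ hMpos)
      exact_mod_cast this
    have hA1 : ((b ^ m / Nat.gcd (b ^ m) n : ℕ) : ℝ) ^ (-α) ≤ 1 :=
      Real.rpow_le_one_of_one_le_of_nonpos h1le (by linarith)
    have hA2 : ((b ^ (m - 1) / Nat.gcd (b ^ (m - 1)) n : ℕ) : ℝ) ^ (-α) ≤ 1 :=
      Real.rpow_le_one_of_one_le_of_nonpos h2le (by linarith)
    have hA1p : 0 ≤ ((b ^ m / Nat.gcd (b ^ m) n : ℕ) : ℝ) ^ (-α) :=
      Real.rpow_nonneg (by linarith) _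
    have hA2p : 0 ≤ ((b ^ (m - 1) / Nat.gcd (b ^ (m - 1)) n : ℕ) : ℝ) ^ (-α) :=
      Real.rpow_nonneg (by linarith) _
    have hNR : (0 : ℝ) < ((b ^ m : ℕ) : ℝ) := by exact_mod_cast hNpos
    have hMR : (0 : ℝ) < ((b ^ (m - 1) : ℕ) : ℝ) := by exact_mod_cast hMpos
    have hMN : ((b ^ (m - 1) : ℕ) : ℝ) ≤ ((b ^ m : ℕ) : ℝ) := by
      exact_mod_cast Nat.pow_le_pow_right hb.pos (by omega)
    have habs : |((b ^ m / Nat.gcd (b ^ m) n : ℕ) : ℝ) ^ (-α) * ((b ^ m : ℕ) : ℝ)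
          - ((b ^ (m - 1) / Nat.gcd (b ^ (m - 1)) n : ℕ) : ℝ) ^ (-α) * ((b ^ (m - 1) : ℕ) : ℝ)|
        ≤ ((b ^ m : ℕ) : ℝ) := by
      rw [abs_le]
      constructor
      · nlinarith
      · nlinarith
    have hN2φ : ((b ^ m : ℕ) : ℝ) ≤ 2 * (Nat.totient (b ^ m) : ℝ) := by
      have : b ^ m ≤ 2 * Nat.totient (b ^ m) := by
        rw [hφ]
        calc b ^ m = b ^ (m - 1) * b := by
              rw [← pow_succ]; congr 1; omega
        _ ≤ b ^ (m - 1) * (2 * (b - 1)) := Nat.mul_le_mul_left _ (by omega)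
        _ = 2 * (b ^ (m - 1) * (b - 1)) := by ring
      exact_mod_cast this
    calc |((b ^ m / Nat.gcd (b ^ m) n : ℕ) : ℝ) ^ (-α) * ((b ^ m : ℕ) : ℝ)
          - ((b ^ (m - 1) / Nat.gcd (b ^ (m - 1)) n : ℕ) : ℝ) ^ (-α) * ((b ^ (m - 1) : ℕ) : ℝ)|
          * (∑' l : ℤ, |(l : ℝ)| ^ (-α)) / (Nat.totient (b ^ m) : ℝ)
        ≤ (2 * (Nat.totient (b ^ m) : ℝ)) * (∑' l : ℤ, |(l : ℝ)| ^ (-α))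
            / (Nat.totient (b ^ m) : ℝ) := by
          gcongr
          exact le_trans habs hN2φ
    _ = 2 * (∑' l : ℤ, |(l : ℝ)| ^ (-α)) := by field_simp
    _ ≤ 2 * (2 * zetaR α) := by linarith
    _ = 4 * zetaR α := by ring
  refine ⟨fun n _ => bound1 n, ?_⟩
  -- sum bound
  have hsum : (∑ n ∈ Finset.Icc 1 (b ^ m),
      ‖(1 / (Nat.totient (b ^ m) : ℂ)) * ∑ z ∈ ZN (b ^ m),
          ∑' l : ℤ, if l = 0 then (0 : ℂ) else
            Complex.exp (2 * Real.pi * Complex.I * n * z * l / (b ^ m : ℕ)) *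
              (|(l : ℝ)| ^ (-α) : ℝ)‖) ≤ 4 * zetaR α := by
    have hsplit := Finset.sum_Icc_succ_top (a := 1) (b := b ^ m - 1) (by omega)
      (fun n : ℕ => ‖(1 / (Nat.totient (b ^ m) : ℂ)) * ∑ z ∈ ZN (b ^ m),
          ∑' l : ℤ, if l = 0 then (0 : ℂ) else
            Complex.exp (2 * Real.pi * Complex.I * n * z * l / (b ^ m : ℕ)) *
              (|(l : ℝ)| ^ (-α) : ℝ)‖)
    rw [show b ^ m - 1 + 1 = b ^ m from by omega] at hsplit
    rw [hsplit]
    -- top term equals Z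
    have htop : ‖(1 / (Nat.totient (b ^ m) : ℂ)) * ∑ z ∈ ZN (b ^ m),
          ∑' l : ℤ, if l = 0 then (0 : ℂ) else
            Complex.exp (2 * Real.pi * Complex.I * (b ^ m : ℕ) * z * l / (b ^ m : ℕ)) *
              (|(l : ℝ)| ^ (-α) : ℝ)‖ ≤ 2 * zetaR α := by
      rw [hval (b ^ m)]
      rw [Nat.gcd_self, Nat.gcd_eq_left (pow_dvd_pow b (by omega : m - 1 ≤ m)),
        Nat.div_self hNpos, Nat.div_self hMpos]
      have hpow : ((b ^ m : ℕ) : ℝ) = (b : ℝ) ^ (m - 1) * (b : ℝ) := by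
        push_cast
        rw [← pow_succ]
        congr 1
        omega
      have habs : |((1 : ℕ) : ℝ) ^ (-α) * ((b ^ m : ℕ) : ℝ)
          - ((1 : ℕ) : ℝ) ^ (-α) * ((b ^ (m - 1) : ℕ) : ℝ)| = (Nat.totient (b ^ m) : ℝ) := by
        rw [Nat.cast_one, Real.one_rpow, one_mul, one_mul, hφcast, hpow]
        push_cast
        rw [abs_of_nonneg]
        · ring
        · nlinarith [pow_pos hx0 (m - 1)]
      rw [habs]
      calc (Nat.totient (b ^ m) : ℝ) * (∑' l : ℤ, |(l : ℝ)| ^ (-α)) / (Nat.totient (b ^ m) : ℝ)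
          = (∑' l : ℤ, |(l : ℝ)| ^ (-α)) := by field_simp
      _ ≤ 2 * zetaR α := hZle
    -- main part
    have hmain : (∑ n ∈ Finset.Icc 1 (b ^ m - 1),
        ‖(1 / (Nat.totient (b ^ m) : ℂ)) * ∑ z ∈ ZN (b ^ m),
          ∑' l : ℤ, if l = 0 then (0 : ℂ) else
            Complex.exp (2 * Real.pi * Complex.I * n * z * l / (b ^ m : ℕ)) *
              (|(l : ℝ)| ^ (-α) : ℝ)‖) ≤ 2 * zetaR α := by
      have hr1 : (b : ℝ) ^ (1 - α) < 1 :=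
        Real.rpow_lt_one_of_one_lt_of_neg hxR (by linarith)
      have hr0 : (0 : ℝ) < (b : ℝ) ^ (1 - α) := Real.rpow_pos_of_pos hx0 _
      set c : ℕ → ℝ := fun j => (b : ℝ) ^ (m - 1) * (b : ℝ) ^ (-((m - 1 - j : ℕ) : ℝ) * α)
          * (1 - (b : ℝ) ^ (1 - α)) * (∑' l : ℤ, |(l : ℝ)| ^ (-α))
          / (Nat.totient (b ^ m) : ℝ) with hc
      have hc0 : ∀ j, 0 ≤ c j := by
        intro j
        apply div_nonneg _ hφR.le
        apply mul_nonneg _ hZ0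
        apply mul_nonneg _ (by linarith)
        positivity
      have hmaps : ∀ n ∈ Finset.Icc 1 (b ^ m - 1),
          (Nat.gcd (b ^ m) n).factorization b ∈ Finset.range m := by
        intro n hn
        rw [Finset.mem_Icc] at hn
        obtain ⟨j, hj, hjm, _, _⟩ := gcd_facts hb hm n hn.1 (by omega)
        rw [Finset.mem_range, hj]
        exact hjm
      rw [← Finset.sum_fiberwise_of_maps_to hmaps
        (fun n : ℕ => ‖(1 / (Nat.totient (b ^ m) : ℂ)) * ∑ z ∈ ZN (b ^ m),
          ∑' l : ℤ, if l = 0 then (0 : ℂ) else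
            Complex.exp (2 * Real.pi * Complex.I * n * z * l / (b ^ m : ℕ)) *
              (|(l : ℝ)| ^ (-α) : ℝ)‖)]
      have step1 : ∀ j ∈ Finset.range m,
          (∑ n ∈ (Finset.Icc 1 (b ^ m - 1)).filter
              (fun n => (Nat.gcd (b ^ m) n).factorization b = j),
            ‖(1 / (Nat.totient (b ^ m) : ℂ)) * ∑ z ∈ ZN (b ^ m),
              ∑' l : ℤ, if l = 0 then (0 : ℂ) else
                Complex.exp (2 * Real.pi * Complex.I * n * z * l / (b ^ m : ℕ)) *
                  (|(l : ℝ)| ^ (-α) : ℝ)‖)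
          ≤ (Nat.totient (b ^ (m - j)) : ℝ) * c j := by
        intro j hj
        rw [Finset.mem_range] at hj
        have hstep : ∀ n ∈ (Finset.Icc 1 (b ^ m - 1)).filter
            (fun n => (Nat.gcd (b ^ m) n).factorization b = j),
            ‖(1 / (Nat.totient (b ^ m) : ℂ)) * ∑ z ∈ ZN (b ^ m),
              ∑' l : ℤ, if l = 0 then (0 : ℂ) else
                Complex.exp (2 * Real.pi * Complex.I * n * z * l / (b ^ m : ℕ)) *
                  (|(l : ℝ)| ^ (-α) : ℝ)‖ ≤ c j := by
          intro n hn
          rw [Finset.mem_filter, Finset.mem_Icc] at hn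
          obtain ⟨⟨hn1, hn2⟩, hfac⟩ := hn
          obtain ⟨j', hj', hj'm, hgcd1, hgcd2⟩ := gcd_facts hb hm n hn1 (by omega)
          have hjj : j = j' := by rw [← hfac, hj']
          subst hjj
          rw [hval n, hgcd1, hgcd2, Nat.pow_div (by omega : j ≤ m) hb.pos,
            Nat.pow_div (by omega : j ≤ m - 1) hb.pos]
          have cast1 : ((b ^ (m - j) : ℕ) : ℝ) = ((b : ℝ) ^ ((m - 1 - j) + 1)) := by
            push_cast
            congr 1
            omega
          have cast2 : ((b ^ m : ℕ) : ℝ) = (b : ℝ) ^ ((m - 1 - j) + 1 + j) := by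
            push_cast
            congr 1
            omega
          have cast3 : ((b ^ (m - 1 - j) : ℕ) : ℝ) = (b : ℝ) ^ (m - 1 - j) := by
            push_cast
            ring
          have cast4 : ((b ^ (m - 1) : ℕ) : ℝ) = (b : ℝ) ^ ((m - 1 - j) + j) := by
            push_cast
            congr 1
            omega
          rw [cast1, cast2, cast3, cast4, abs_diff_eq hxR hα (m - 1 - j) j]
          apply le_of_eq
          simp only [hc]
          rw [show m - 1 = (m - 1 - j) + j from by omega]
          simp only [Nat.add_sub_cancel]
        calc (∑ n ∈ (Finset.Icc 1 (b ^ m - 1)).filter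
              (fun n => (Nat.gcd (b ^ m) n).factorization b = j),
            ‖(1 / (Nat.totient (b ^ m) : ℂ)) * ∑ z ∈ ZN (b ^ m),
              ∑' l : ℤ, if l = 0 then (0 : ℂ) else
                Complex.exp (2 * Real.pi * Complex.I * n * z * l / (b ^ m : ℕ)) *
                  (|(l : ℝ)| ^ (-α) : ℝ)‖)
            ≤ ((Finset.Icc 1 (b ^ m - 1)).filter
              (fun n => (Nat.gcd (b ^ m) n).factorization b = j)).card • c j :=
              Finset.sum_le_card_nsmul _ _ _ hstep
        _ = (((Finset.Icc 1 (b ^ m - 1)).filter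
              (fun n => (Nat.gcd (b ^ m) n).factorization b = j)).card : ℝ) * c j :=
              nsmul_eq_mul _ _
        _ ≤ (Nat.totient (b ^ (m - j)) : ℝ) * c j := by
              apply mul_le_mul_of_nonneg_right _ (hc0 j)
              exact_mod_cast card_filter_le hb hm j hj
      calc (∑ j ∈ Finset.range m, ∑ n ∈ (Finset.Icc 1 (b ^ m - 1)).filter
              (fun n => (Nat.gcd (b ^ m) n).factorization b = j),
            ‖(1 / (Nat.totient (b ^ m) : ℂ)) * ∑ z ∈ ZN (b ^ m),
              ∑' l : ℤ, if l = 0 then (0 : ℂ) else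
                Complex.exp (2 * Real.pi * Complex.I * n * z * l / (b ^ m : ℕ)) *
                  (|(l : ℝ)| ^ (-α) : ℝ)‖)
          ≤ ∑ j ∈ Finset.range m, (Nat.totient (b ^ (m - j)) : ℝ) * c j :=
            Finset.sum_le_sum step1
      _ ≤ 2 * zetaR α := by
            have hterm : ∀ j ∈ Finset.range m, (Nat.totient (b ^ (m - j)) : ℝ) * c j
                = ((∑' l : ℤ, |(l : ℝ)| ^ (-α)) * (1 - (b : ℝ) ^ (1 - α)))
                    * ((b : ℝ) ^ (1 - α)) ^ (m - 1 - j) := by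
              intro j hj
              rw [Finset.mem_range] at hj
              rw [Nat.totient_prime_pow hb (by omega : 0 < m - j)]
              have hcast : ((b ^ (m - j - 1) * (b - 1) : ℕ) : ℝ)
                  = (b : ℝ) ^ (m - 1 - j) * ((b : ℝ) - 1) := by
                push_cast [Nat.cast_sub hb.one_le]
                rw [show m - j - 1 = m - 1 - j from by omega]
              rw [hcast]
              simp only [hc]
              rw [hφcast, ← pow_mul_rpow hx0 (m - 1 - j)]
              have hb1ne : (b : ℝ) - 1 ≠ 0 := by linarith
              have hpowne : (b : ℝ) ^ (m - 1) ≠ 0 := by positivity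
              field_simp
            rw [Finset.sum_congr rfl hterm, ← Finset.mul_sum,
              Finset.sum_range_reflect (fun k => ((b : ℝ) ^ (1 - α)) ^ k) m,
              geom_sum_eq (ne_of_lt hr1)]
            have heq : ((∑' l : ℤ, |(l : ℝ)| ^ (-α)) * (1 - (b : ℝ) ^ (1 - α)))
                * ((((b : ℝ) ^ (1 - α)) ^ m - 1) / ((b : ℝ) ^ (1 - α) - 1))
                = (∑' l : ℤ, |(l : ℝ)| ^ (-α)) * (1 - ((b : ℝ) ^ (1 - α)) ^ m) := by
              have h1 : (b : ℝ) ^ (1 - α) - 1 ≠ 0 := by linarith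
              field_simp
              ring
            rw [heq]
            have hle : (∑' l : ℤ, |(l : ℝ)| ^ (-α)) * (1 - ((b : ℝ) ^ (1 - α)) ^ m)
                ≤ (∑' l : ℤ, |(l : ℝ)| ^ (-α)) * 1 := by
              apply mul_le_mul_of_nonneg_left _ hZ0
              nlinarith [pow_nonneg hr0.le m]
            rw [mul_one] at hle
            linarith
    linarith
  have hbmR : (0 : ℝ) < (b : ℝ) ^ m := pow_pos hx0 m
  calc (1 / ((b : ℝ) ^ m)) * ∑ n ∈ Finset.Icc 1 (b ^ m),
        ‖(1 / (Nat.totient (b ^ m) : ℂ)) * ∑ z ∈ ZN (b ^ m),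
          ∑' l : ℤ, if l = 0 then (0 : ℂ) else
            Complex.exp (2 * Real.pi * Complex.I * n * z * l / (b ^ m : ℕ)) *
              (|(l : ℝ)| ^ (-α) : ℝ)‖
      ≤ (1 / ((b : ℝ) ^ m)) * (4 * zetaR α) := by
        apply mul_le_mul_of_nonneg_left hsum
        positivity
  _ = 4 * zetaR α / (b : ℝ) ^ m := by ring
end
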